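/- Let P, Q be weakly compact convex sets of probability measures on a Polish space X. Then KL(P‖Q) = 0 if and only if P ⊆ Q. -/

import Mathlib

open MeasureTheory Real ENNReal Filter Topology
open scoped Classical

noncomputable def klDiv {X : Type*} [MeasurableSpace X] (μ ν : Measure X) : EReal :=
  if μ ≪ ν ∧ Integrable (fun x => Real.log (μ.rnDeriv ν x).toReal) μ
  then ((∫ x, Real.log (μ.rnDeriv ν x).toReal ∂μ : ℝ) : EReal)
  else ⊤

noncomputable def tvDist {X : Type*} [MeasurableSpace X] (μ ν : Measure X) : ℝ :=
  ⨆ A : {A : Set X // MeasurableSet A}, |(μ A).toReal - (ν A).toReal|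


noncomputable def genKL {X : Type*} [MeasurableSpace X]
    (P Q : Set (ProbabilityMeasure X)) : EReal :=
  ⨆ μ ∈ P, ⨅ ν ∈ Q, klDiv μ.toMeasure ν.toMeasure

noncomputable def genV {X : Type*} [MeasurableSpace X]
    (P Q : Set (ProbabilityMeasure X)) : ℝ :=
  max (⨆ μ : P, ⨅ ν : Q, tvDist μ.1.toMeasure ν.1.toMeasure)
      (⨆ ν : Q, ⨅ μ : P, tvDist μ.1.toMeasure ν.1.toMeasure)

def ConvexPM {X : Type*} [MeasurableSpace X] (P : Set (ProbabilityMeasure X)) : Prop :=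
  ∀ μ ∈ P, ∀ ν ∈ P, ∀ a b : ℝ≥0∞, a + b = 1 →
    ∃ κ ∈ P, κ.toMeasure = a • μ.toMeasure + b • ν.toMeasure

def midSet {X : Type*} [MeasurableSpace X]
    (P Q : Set (ProbabilityMeasure X)) : Set (ProbabilityMeasure X) :=
  {κ | ∃ μ ∈ P, ∃ ν ∈ Q, κ.toMeasure = (2:ℝ≥0∞)⁻¹ • μ.toMeasure + (2:ℝ≥0∞)⁻¹ • ν.toMeasure}

noncomputable def genJS {X : Type*} [MeasurableSpace X]
    (P Q : Set (ProbabilityMeasure X)) : EReal :=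
  ((1/2 : ℝ) : EReal) * genKL P (midSet P Q) + ((1/2 : ℝ) : EReal) * genKL Q (midSet P Q)



section Aux

lemma aux_log_ge (x : ℝ) (hx : 0 < x) : 1 - x⁻¹ ≤ Real.log x := by
  have h := Real.log_le_sub_one_of_pos (inv_pos.2 hx)
  rw [Real.log_inv] at h
  linarith

lemma aux_psi_nonneg (x : ℝ) (hx : 0 ≤ x) : 0 ≤ x * Real.log x - x + 1 := by
  rcases eq_or_lt_of_le hx with h | h
  · simp [← h]
  · have h1 := aux_log_ge x h
    have h2 : x * (1 - x⁻¹) ≤ x * Real.log x := by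
      exact mul_le_mul_of_nonneg_left h1 h.le
    have h3 : x * (1 - x⁻¹) = x - 1 := by field_simp
    nlinarith

lemma aux_h_deriv (y : ℝ) (hy : 0 < y) :
    HasDerivAt (fun t => (t + 1) * Real.log t - 2 * (t - 1))
      (Real.log y + (y + 1) * y⁻¹ - 2) y := by
  have h1 : HasDerivAt (fun t : ℝ => (t + 1) * Real.log t)
      (1 * Real.log y + (y + 1) * y⁻¹) y :=
    ((hasDerivAt_id y).add_const 1).mul (Real.hasDerivAt_log hy.ne')
  have h2 : HasDerivAt (fun t : ℝ => 2 * (t - 1)) 2 y := by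
    simpa using ((hasDerivAt_id y).sub_const 1).const_mul 2
  have h3 := h1.sub h2
  rw [one_mul] at h3
  exact h3

lemma aux_h_mono : MonotoneOn (fun t : ℝ => (t + 1) * Real.log t - 2 * (t - 1)) (Set.Ioi 0) := by
  have hint : interior (Set.Ioi (0:ℝ)) = Set.Ioi 0 := interior_Ioi
  apply monotoneOn_of_deriv_nonneg (convex_Ioi 0)
  · intro y hy
    exact ((aux_h_deriv y hy).continuousAt).continuousWithinAt
  · rw [hint]
    intro y hy
    exact (aux_h_deriv y hy).differentiableAt.differentiableWithinAt
  · rw [hint]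
    intro y hy
    rw [(aux_h_deriv y hy).deriv]
    have h1 := aux_log_ge y hy
    have hy0 : y ≠ 0 := (ne_of_gt hy)
    have : (y + 1) * y⁻¹ = 1 + y⁻¹ := by field_simp
    rw [this]
    linarith



lemma aux_g_deriv (y : ℝ) (hy : 0 < y) :
    HasDerivAt (fun t => (2 * t + 4) * (t * Real.log t - t + 1) - 3 * (t - 1) ^ 2)
      (4 * ((y + 1) * Real.log y - 2 * (y - 1))) y := by
  have hml : HasDerivAt (fun t : ℝ => t * Real.log t) (Real.log y + 1) y :=
    Real.hasDerivAt_mul_log hy.ne'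
  have h1 : HasDerivAt (fun t : ℝ => t * Real.log t - t + 1) (Real.log y + 1 - 1) y :=
    (hml.sub (hasDerivAt_id y)).add_const 1
  have h2 : HasDerivAt (fun t : ℝ => 2 * t + 4) 2 y := by
    simpa using ((hasDerivAt_id y).const_mul 2).add_const 4
  have h3 : HasDerivAt (fun t : ℝ => (2 * t + 4) * (t * Real.log t - t + 1))
      (2 * (y * Real.log y - y + 1) + (2 * y + 4) * (Real.log y + 1 - 1)) y := h2.mul h1
  have h4 : HasDerivAt (fun t : ℝ => 3 * (t - 1) ^ 2) (3 * (2 * (y - 1))) y := by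
    simpa using (((hasDerivAt_id y).sub_const 1).pow 2).const_mul 3
  have : HasDerivAt (fun t => (2 * t + 4) * (t * Real.log t - t + 1) - 3 * (t - 1) ^ 2) _ y := h3.sub h4
  convert this using 1
  ring

lemma aux_key_ineq (x : ℝ) (hx : 0 ≤ x) :
    3 * (x - 1) ^ 2 ≤ (2 * x + 4) * (x * Real.log x - x + 1) := by
  rcases eq_or_lt_of_le hx with h | hx
  · simp [← h]; norm_num
  set g : ℝ → ℝ := fun t => (2 * t + 4) * (t * Real.log t - t + 1) - 3 * (t - 1) ^ 2 with hg
  have hg1 : g 1 = 0 := by simp [hg]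
  have hh1 : (fun t : ℝ => (t + 1) * Real.log t - 2 * (t - 1)) 1 = 0 := by simp
  have hgnn : 0 ≤ g x := by
    rcases le_total x 1 with hx1 | hx1
    · -- antitone on Ioc 0 1
      have hanti : AntitoneOn g (Set.Ioc 0 1) := by
        apply antitoneOn_of_deriv_nonpos (convex_Ioc 0 1)
        · intro y hy
          exact ((aux_g_deriv y hy.1).continuousAt).continuousWithinAt
        · rw [interior_Ioc]
          intro y hy
          exact (aux_g_deriv y hy.1).differentiableAt.differentiableWithinAt
        · rw [interior_Ioc]
          intro y hy
          rw [(aux_g_deriv y hy.1).deriv]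
          have := aux_h_mono (Set.mem_Ioi.2 hy.1) (Set.mem_Ioi.2 one_pos) hy.2.le
          rw [hh1] at this
          have h' : (y + 1) * Real.log y - 2 * (y - 1) ≤ 0 := this
          linarith
      have := hanti ⟨hx, hx1⟩ ⟨one_pos, le_refl 1⟩ hx1
      rw [hg1] at this
      linarith
    · have hmono : MonotoneOn g (Set.Ici 1) := by
        apply monotoneOn_of_deriv_nonneg (convex_Ici 1)
        · intro y hy
          exact ((aux_g_deriv y (lt_of_lt_of_le one_pos hy)).continuousAt).continuousWithinAt
        · rw [interior_Ici]
          intro y hy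
          exact (aux_g_deriv y (lt_trans one_pos hy)).differentiableAt.differentiableWithinAt
        · rw [interior_Ici]
          intro y hy
          rw [(aux_g_deriv y (lt_trans one_pos hy)).deriv]
          have := aux_h_mono (Set.mem_Ioi.2 one_pos) (Set.mem_Ioi.2 (lt_trans one_pos hy)) (le_of_lt hy)
          rw [hh1] at this
          have h' : 0 ≤ (y + 1) * Real.log y - 2 * (y - 1) := this
          linarith
      have := hmono (Set.mem_Ici.2 (le_refl 1)) (Set.mem_Ici.2 hx1) hx1
      rw [hg1] at this
      linarith
  simp only [hg] at hgnn
  linarith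

section CoreSec
variable {X : Type*} [MeasurableSpace X] [TopologicalSpace X] [OpensMeasurableSpace X]

lemma aux_core (μ ν : Measure X) [IsProbabilityMeasure μ] [IsProbabilityMeasure ν]
    (hμν : μ ≪ ν) (hint : Integrable (fun x => Real.log (μ.rnDeriv ν x).toReal) μ) :
    0 ≤ ∫ x, Real.log (μ.rnDeriv ν x).toReal ∂μ ∧
    ∀ g : BoundedContinuousFunction X ℝ, |∫ x, g x ∂μ - ∫ x, g x ∂ν| ≤
      ‖g‖ * Real.sqrt (2 * ∫ x, Real.log (μ.rnDeriv ν x).toReal ∂μ) := by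
  set f : X → ℝ := fun x => (μ.rnDeriv ν x).toReal with hf
  set KL : ℝ := ∫ x, Real.log (f x) ∂μ with hKL
  have hfm : Measurable f := (Measure.measurable_rnDeriv μ ν).ennreal_toReal
  have hf0 : ∀ x, 0 ≤ f x := fun x => ENNReal.toReal_nonneg
  have hf_int : Integrable f ν := Measure.integrable_toReal_rnDeriv
  have hf_one : ∫ x, f x ∂ν = 1 := by
    rw [hf, Measure.integral_toReal_rnDeriv hμν]; simp
  have hflogf_int : Integrable (fun x => f x * Real.log (f x)) ν := by
    have := (integrable_rnDeriv_smul_iff (f := fun x => Real.log (f x)) hμν).mpr hint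
    simpa [smul_eq_mul] using this
  have hKL_eq : ∫ x, f x * Real.log (f x) ∂ν = KL := by
    have := integral_rnDeriv_smul (f := fun x => Real.log (f x)) hμν
    simpa [smul_eq_mul] using this
  set ψf : X → ℝ := fun x => f x * Real.log (f x) - f x + 1 with hψf
  have hψ_int : Integrable ψf ν := (hflogf_int.sub hf_int).add (integrable_const 1)
  have hψ_nonneg : ∀ x, 0 ≤ ψf x := fun x => aux_psi_nonneg (f x) (hf0 x)
  have hψ_eq : ∫ x, ψf x ∂ν = KL := by
    have hsub : Integrable (fun x => f x * Real.log (f x) - f x) ν := hflogf_int.sub hf_int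
    calc ∫ x, ψf x ∂ν = ∫ x, (f x * Real.log (f x) - f x) + 1 ∂ν := rfl
    _ = (∫ x, f x * Real.log (f x) - f x ∂ν) + ∫ _x, (1:ℝ) ∂ν := integral_add hsub (integrable_const 1)
    _ = ((∫ x, f x * Real.log (f x) ∂ν) - ∫ x, f x ∂ν) + ∫ _x, (1:ℝ) ∂ν := by
        rw [integral_sub hflogf_int hf_int]
    _ = KL := by rw [hKL_eq, hf_one]; simp
  have hKL0 : 0 ≤ KL := by
    rw [← hψ_eq]
    exact integral_nonneg hψ_nonneg
  -- Pinsker-type bound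
  have habs_int : Integrable (fun x => |f x - 1|) ν := (hf_int.sub (integrable_const 1)).abs
  have hpinsker : ∫ x, |f x - 1| ∂ν ≤ Real.sqrt (2 * KL) := by
    set u : X → ℝ := fun x => |f x - 1| / Real.sqrt (2 * f x + 4) with hu
    set v : X → ℝ := fun x => Real.sqrt (2 * f x + 4) with hv
    have hs_pos : ∀ x, 0 < 2 * f x + 4 := fun x => by nlinarith [hf0 x]
    have hv_pos : ∀ x, 0 < v x := fun x => Real.sqrt_pos.2 (hs_pos x)
    have huv : ∀ x, u x * v x = |f x - 1| := fun x =>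
      div_mul_cancel₀ _ (hv_pos x).ne'
    have hu_nonneg : ∀ x, 0 ≤ u x := fun x => div_nonneg (abs_nonneg _) (Real.sqrt_nonneg _)
    have hv2 : ∀ x, v x ^ 2 = 2 * f x + 4 := fun x => Real.sq_sqrt (hs_pos x).le
    have hu2 : ∀ x, u x ^ 2 ≤ (1/3) * ψf x := by
      intro x
      have h1 : u x ^ 2 = (f x - 1) ^ 2 / (2 * f x + 4) := by
        rw [hu]
        simp only
        rw [div_pow, sq_abs, hv2 x]
      rw [h1, div_le_iff₀ (hs_pos x)]
      have hk := aux_key_ineq (f x) (hf0 x)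
      have : ψf x = f x * Real.log (f x) - f x + 1 := rfl
      nlinarith [hk]
    have hv_meas : Measurable v := Real.continuous_sqrt.measurable.comp
      ((hfm.const_mul 2).add_const 4)
    have hu_meas : Measurable u := (hfm.sub measurable_const).abs.div hv_meas
    have hu2_int : Integrable (fun x => u x ^ 2) ν := by
      refine Integrable.mono' (hψ_int.const_mul (1/3)) (hu_meas.pow_const 2).aestronglyMeasurable
        (Eventually.of_forall fun x => ?_)
      rw [Real.norm_eq_abs, abs_of_nonneg (sq_nonneg (u x))]
      exact hu2 x
    have hv2_int : Integrable (fun x => v x ^ 2) ν := by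
      refine (integrable_congr (Eventually.of_forall fun x => (hv2 x).symm)).mp ?_
      exact (hf_int.const_mul 2).add (integrable_const 4)
    have h2e : (ENNReal.ofReal 2) = 2 := by norm_num
    have hu_mem : MemLp u (ENNReal.ofReal 2) ν := by
      rw [h2e]
      exact (memLp_two_iff_integrable_sq hu_meas.aestronglyMeasurable).2 hu2_int
    have hv_mem : MemLp v (ENNReal.ofReal 2) ν := by
      rw [h2e]
      exact (memLp_two_iff_integrable_sq hv_meas.aestronglyMeasurable).2 hv2_int
    have hpq : Real.HolderConjugate 2 2 := Real.HolderConjugate.two_two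
    have hCS := integral_mul_le_Lp_mul_Lq_of_nonneg hpq (Eventually.of_forall hu_nonneg)
      (Eventually.of_forall fun x => Real.sqrt_nonneg _) hu_mem hv_mem
    simp only [show (2:ℝ) = ((2:ℕ):ℝ) by norm_num, Real.rpow_natCast] at hCS
    have hA_nonneg : 0 ≤ ∫ x, u x ^ 2 ∂ν := integral_nonneg fun x => sq_nonneg _
    have hA_le : ∫ x, u x ^ 2 ∂ν ≤ (1/3) * KL := by
      calc ∫ x, u x ^ 2 ∂ν ≤ ∫ x, (1/3) * ψf x ∂ν := integral_mono hu2_int (hψ_int.const_mul (1/3)) hu2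
      _ = (1/3) * KL := by rw [integral_const_mul, hψ_eq]
    have hB_eq : ∫ x, v x ^ 2 ∂ν = 6 := by
      calc ∫ x, v x ^ 2 ∂ν = ∫ x, 2 * f x + 4 ∂ν :=
            integral_congr_ae (Eventually.of_forall fun x => hv2 x)
      _ = 2 * ∫ x, f x ∂ν + 4 := by
          rw [integral_add (hf_int.const_mul 2) (integrable_const 4), integral_const_mul]
          simp
      _ = 6 := by rw [hf_one]; norm_num
    have hfin : (∫ x, u x ^ 2 ∂ν) ^ ((1:ℝ)/2) * (∫ x, v x ^ 2 ∂ν) ^ ((1:ℝ)/2)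
        ≤ Real.sqrt (2 * KL) := by
      rw [← Real.sqrt_eq_rpow, ← Real.sqrt_eq_rpow, hB_eq]
      rw [← Real.sqrt_mul hA_nonneg]
      apply Real.sqrt_le_sqrt
      nlinarith [hA_le]
    calc ∫ x, |f x - 1| ∂ν = ∫ x, u x * v x ∂ν :=
          integral_congr_ae (Eventually.of_forall fun x => (huv x).symm)
    _ ≤ (∫ x, u x ^ 2 ∂ν) ^ ((1:ℝ)/2) * (∫ x, v x ^ 2 ∂ν) ^ ((1:ℝ)/2) := by
        simp only [Nat.cast_ofNat] at hCS
        exact hCS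
    _ ≤ Real.sqrt (2 * KL) := hfin
  refine ⟨hKL0, fun g => ?_⟩
  have hg_int_μ : Integrable (fun x => g x) μ := g.integrable μ
  have hg_int_ν : Integrable (fun x => g x) ν := g.integrable ν
  have hfg_int : Integrable (fun x => f x * g x) ν := by
    have := (integrable_rnDeriv_smul_iff (f := fun x => g x) hμν).2 hg_int_μ
    simpa [smul_eq_mul] using this
  have h1 : ∫ x, g x ∂μ = ∫ x, f x * g x ∂ν := by
    have := integral_rnDeriv_smul (f := fun x => g x) hμν
    simp only [smul_eq_mul] at this
    exact this.symm
  have hsub_int : Integrable (fun x => (f x - 1) * g x) ν := by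
    refine (integrable_congr (Eventually.of_forall fun x => ?_)).mp (hfg_int.sub hg_int_ν)
    simp only [Pi.sub_apply]
    ring
  have h2 : ∫ x, g x ∂μ - ∫ x, g x ∂ν = ∫ x, (f x - 1) * g x ∂ν := by
    rw [h1, ← integral_sub hfg_int hg_int_ν]
    exact integral_congr_ae (Eventually.of_forall fun x => by ring)
  rw [h2]
  calc |∫ x, (f x - 1) * g x ∂ν| ≤ ∫ x, |f x - 1| * |g x| ∂ν := by
        simpa [Real.norm_eq_abs, abs_mul] using norm_integral_le_integral_norm (fun x => (f x - 1) * g x) (μ := ν)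
  _ ≤ ∫ x, |f x - 1| * ‖g‖ ∂ν := by
      have habs2 : Integrable (fun x => |(f x - 1) * g x|) ν := hsub_int.abs
      have habs2' : Integrable (fun x => |f x - 1| * |g x|) ν := by
        refine (integrable_congr (Eventually.of_forall fun x => ?_)).mpr habs2
        rw [abs_mul]
      refine integral_mono habs2' (habs_int.mul_const ‖g‖)
        (fun x => ?_)
      have hgx := g.norm_coe_le_norm x
      rw [Real.norm_eq_abs] at hgx
      exact mul_le_mul_of_nonneg_left hgx (abs_nonneg _)
  _ = ‖g‖ * ∫ x, |f x - 1| ∂ν := by rw [integral_mul_const, mul_comm]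
  _ ≤ ‖g‖ * Real.sqrt (2 * KL) := mul_le_mul_of_nonneg_left hpinsker (norm_nonneg g)

end CoreSec
section Pieces
variable {X : Type*} [MeasurableSpace X]

lemma aux_klDiv_self (μ : Measure X) [SigmaFinite μ] : klDiv μ μ = 0 := by
  have h1 : (fun x => Real.log (μ.rnDeriv μ x).toReal) =ᵐ[μ] fun _ => (0:ℝ) := by
    filter_upwards [μ.rnDeriv_self] with x hx
    simp [hx]
  have hint : Integrable (fun x => Real.log (μ.rnDeriv μ x).toReal) μ :=
    (integrable_congr h1).mpr (integrable_zero _ _ _)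
  rw [klDiv, if_pos ⟨Measure.AbsolutelyContinuous.rfl, hint⟩, integral_congr_ae h1]
  simp

lemma aux_klDiv_nonneg [TopologicalSpace X] [OpensMeasurableSpace X]
    (μ ν : Measure X) [IsProbabilityMeasure μ] [IsProbabilityMeasure ν] :
    0 ≤ klDiv μ ν := by
  rw [klDiv]
  split_ifs with h
  · exact_mod_cast (aux_core μ ν h.1 h.2).1
  · exact le_top
end Pieces

theorem genKL_eq_zero_iff_subset {X : Type*} [MeasurableSpace X] [TopologicalSpace X]
    [PolishSpace X] [BorelSpace X] (P Q : Set (ProbabilityMeasure X))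
    (hPne : P.Nonempty) (hQne : Q.Nonempty) (hPc : IsCompact P) (hQc : IsCompact Q)
    (hPconv : ConvexPM P) (hQconv : ConvexPM Q) :
    genKL P Q = 0 ↔ P ⊆ Q := by
  constructor
  · intro h0 μ hμP
    -- the infimum over Q is ≤ 0
    have hinf_le : (⨅ ν ∈ Q, klDiv μ.toMeasure ν.toMeasure) ≤ 0 := by
      rw [← h0]
      exact le_iSup₂ (f := fun (μ : ProbabilityMeasure X) (_ : μ ∈ P) =>
        ⨅ ν ∈ Q, klDiv μ.toMeasure ν.toMeasure) μ hμP
    -- for every n, find a good ν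
    have hex : ∀ n : ℕ, ∃ ν : ProbabilityMeasure X, ν ∈ Q ∧
        ∃ h : μ.toMeasure ≪ ν.toMeasure ∧
          Integrable (fun x => Real.log (μ.toMeasure.rnDeriv ν.toMeasure x).toReal) μ.toMeasure,
        ∫ x, Real.log (μ.toMeasure.rnDeriv ν.toMeasure x).toReal ∂μ.toMeasure ≤ 1/(n+1) := by
      intro n
      have hc : (0:EReal) < ((1/(n+1) : ℝ) : EReal) := by
        rw [show (0:EReal) = ((0:ℝ):EReal) from rfl, EReal.coe_lt_coe_iff]
        positivity
      have hlt : (⨅ ν ∈ Q, klDiv μ.toMeasure ν.toMeasure) < ((1/(n+1) : ℝ) : EReal) :=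
        lt_of_le_of_lt hinf_le hc
      rw [iInf_lt_iff] at hlt
      obtain ⟨ν, hlt⟩ := hlt
      rw [iInf_lt_iff] at hlt
      obtain ⟨hνQ, hlt⟩ := hlt
      refine ⟨ν, hνQ, ?_⟩
      rw [klDiv] at hlt
      split_ifs at hlt with hcond
      · exact ⟨hcond, by exact_mod_cast (le_of_lt (EReal.coe_lt_coe_iff.mp hlt))⟩
      · exact absurd hlt (by simp)
    choose νs hνsQ hcond hνs_le using hex
    -- convergence
    have htends : Tendsto νs atTop (𝓝 μ) := by
      rw [ProbabilityMeasure.tendsto_iff_forall_integral_tendsto]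
      intro g
      rw [tendsto_iff_dist_tendsto_zero]
      refine squeeze_zero (g := fun n : ℕ => ‖g‖ * Real.sqrt (2 * (1/((n:ℝ)+1))))
        (fun n => dist_nonneg) (fun n => ?_) ?_
      · 
        have hcore := aux_core μ.toMeasure (νs n).toMeasure (hcond n).1 (hcond n).2
        have h1 := hcore.2 g
        have hKL0 := hcore.1
        rw [Real.dist_eq]
        have h2 : ‖g‖ * Real.sqrt (2 * ∫ x, Real.log
              (μ.toMeasure.rnDeriv (νs n).toMeasure x).toReal ∂μ.toMeasure)
            ≤ ‖g‖ * Real.sqrt (2 * (1/(n+1))) := by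
          apply mul_le_mul_of_nonneg_left _ (norm_nonneg g)
          apply Real.sqrt_le_sqrt
          linarith [hνs_le n]
        calc |∫ x, g x ∂(νs n).toMeasure - ∫ x, g x ∂μ.toMeasure|
            = |∫ x, g x ∂μ.toMeasure - ∫ x, g x ∂(νs n).toMeasure| := abs_sub_comm _ _
        _ ≤ ‖g‖ * Real.sqrt (2 * (1/(n+1))) := le_trans h1 h2
      · have h3 : Tendsto (fun n : ℕ => 2 * (1/((n:ℝ)+1))) atTop (𝓝 0) := by
          have := tendsto_one_div_add_atTop_nhds_zero_nat (𝕜 := ℝ)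
          simpa using this.const_mul 2
        have h4 : Tendsto (fun n : ℕ => Real.sqrt (2 * (1/((n:ℝ)+1)))) atTop (𝓝 0) := by
          have := (Real.continuous_sqrt.tendsto 0).comp h3
          rw [Real.sqrt_zero] at this
          exact this
        simpa using h4.const_mul ‖g‖
    exact hQc.isClosed.mem_of_tendsto htends (Eventually.of_forall hνsQ)
  · intro hPQ
    refine le_antisymm ?_ ?_
    · refine iSup₂_le fun μ hμ => ?_
      refine le_trans (iInf₂_le μ (hPQ hμ)) ?_
      rw [aux_klDiv_self]
    · obtain ⟨μ0, hμ0⟩ := hPne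
      refine le_trans ?_ (le_iSup₂ (f := fun (μ : ProbabilityMeasure X) (_ : μ ∈ P) =>
        ⨅ ν ∈ Q, klDiv μ.toMeasure ν.toMeasure) μ0 hμ0)
      exact le_iInf₂ fun ν hν => aux_klDiv_nonneg μ0.toMeasure ν.toMeasure

end Aux
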